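/- Let G be a graph with a NAC-coloring δ, and let u, v, w be vertices with uv, vw ∈ E(G) such that u and w lie in the same connected component of the subgraph induced by the edges of one color class. Then δ(uv) = δ(vw). -/

import Mathlib

open SimpleGraph

def IsNACColoring {V : Type*} (G : SimpleGraph V) (δ : Sym2 V → Bool) : Prop :=
  (∃ e ∈ G.edgeSet, δ e = true) ∧ (∃ e ∈ G.edgeSet, δ e = false) ∧
  ∀ ⦃u : V⦄ (w : G.Walk u u), w.IsCycle →
    ∀ b : Bool, (w.edges.countP fun e => δ e == b) ≠ 1

/-- The spanning subgraph of `G` consisting of the edges of color `c`. -/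
def colorSubgraph {V : Type*} (G : SimpleGraph V) (δ : Sym2 V → Bool) (c : Bool) :
    SimpleGraph V :=
  SimpleGraph.fromEdgeSet {e | e ∈ G.edgeSet ∧ δ e = c}

lemma colorSubgraph_edges {V : Type*} {G : SimpleGraph V} {δ : Sym2 V → Bool} {c : Bool}
    {x y : V} (p : (colorSubgraph G δ c).Walk x y) :
    ∀ e ∈ p.edges, e ∈ G.edgeSet ∧ δ e = c := by
  intro e he
  have h := p.edges_subset_edgeSet he
  rw [colorSubgraph, edgeSet_fromEdgeSet] at h
  exact h.1

/-- If an edge `vx` has color different from `c`, then `x` cannot reach `v`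
in the `c`-colored subgraph. -/
lemma not_reach_of_ne_color {V : Type*} {G : SimpleGraph V} {δ : Sym2 V → Bool}
    (hδ : IsNACColoring G δ) {c : Bool} {v x : V} (hadj : G.Adj v x)
    (hc : δ s(v, x) ≠ c) (hr : (colorSubgraph G δ c).Reachable x v) : False := by
  classical
  obtain ⟨q⟩ := hr
  let p := q.toPath.1
  have hp : p.IsPath := q.toPath.2
  have hcol := colorSubgraph_edges p
  have hGe : ∀ e ∈ p.edges, e ∈ G.edgeSet := fun e he => (hcol e he).1
  let p' : G.Walk x v := p.transfer G hGe
  have hp' : p'.IsPath := hp.transfer hGe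
  have hedges : p'.edges = p.edges := p.edges_transfer hGe
  have hnotin : s(v, x) ∉ p'.edges := by
    rw [hedges]
    intro hmem
    exact hc (hcol _ hmem).2
  have hcyc : (Walk.cons hadj p').IsCycle :=
    (Walk.cons_isCycle_iff p' hadj).mpr ⟨hp', hnotin⟩
  apply hδ.2.2 _ hcyc (δ s(v, x))
  rw [Walk.edges_cons, List.countP_cons_of_pos (p := fun e => δ e == δ s(v, x)) (a := s(v, x)) (by simp), hedges]
  rw [List.countP_eq_zero.mpr]
  · intro e he
    simp only [beq_iff_eq]
    intro h
    exact hc ((hcol e he).2 ▸ h.symm ▸ rfl)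

theorem path_endpoints_in_component_same_color {V : Type*} (G : SimpleGraph V)
    (δ : Sym2 V → Bool) (hδ : IsNACColoring G δ) (u v w : V) (c : Bool)
    (huv : G.Adj u v) (hvw : G.Adj v w)
    (hreach : (colorSubgraph G δ c).Reachable u w) :
    δ s(u, v) = δ s(v, w) := by
  by_cases huw : u = w
  · subst huw; rw [Sym2.eq_swap]
  classical
  by_contra hne
  -- exactly one of the two colors is `c`
  by_cases hv : (colorSubgraph G δ c).Reachable u v
  · -- v is in the same component; use the short cycle with the odd-colored edge
    by_cases h1 : δ s(u, v) = c
    · have h2 : δ s(v, w) ≠ c := fun h => hne (h1.trans h.symm)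
      exact not_reach_of_ne_color hδ hvw h2 (hreach.symm.trans hv)
    · exact not_reach_of_ne_color hδ huv.symm (by rwa [Sym2.eq_swap]) hv
  · -- v is not in the component: build the long cycle v-u-...-w-v
    classical
  obtain ⟨q⟩ := hreach
    let p := q.toPath.1
    have hp : p.IsPath := q.toPath.2
    have hcol := colorSubgraph_edges p
    have hGe : ∀ e ∈ p.edges, e ∈ G.edgeSet := fun e he => (hcol e he).1
    let p' : G.Walk u w := p.transfer G hGe
    have hp' : p'.IsPath := hp.transfer hGe
    have hedges : p'.edges = p.edges := p.edges_transfer hGe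
    have hsupp : p'.support = p.support := p.support_transfer hGe
    have hvns : v ∉ p'.support := by
      rw [hsupp]
      intro hmem
      exact hv ⟨p.takeUntil v hmem⟩
    -- the walk u → w → v
    let q' : G.Walk u v := p'.append (Walk.cons hvw.symm Walk.nil)
    have hq'supp : q'.support = p'.support ++ [v] := by
      simp [q', Walk.support_append]
    have hq'path : q'.IsPath := by
      rw [Walk.isPath_def, hq'supp]
      refine List.Nodup.append hp'.support_nodup (List.nodup_singleton v) ?_
      intro a ha hb
      rw [List.mem_singleton] at hb
      subst hb
      exact hvns ha
    have hq'edges : q'.edges = p'.edges ++ [s(w, v)] := by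
      simp [q', Walk.edges_append]
    have hnotin : s(v, u) ∉ q'.edges := by
      rw [hq'edges]
      intro hmem
      rcases List.mem_append.mp hmem with h | h
      · rw [hedges] at h
        have := Walk.fst_mem_support_of_mem_edges p h
        exact hv ⟨p.takeUntil v this⟩
      · rw [List.mem_singleton, Sym2.eq_iff] at h
        rcases h with ⟨h1, h2⟩ | ⟨h1, h2⟩
        · exact huw (h2.trans h1)
        · exact huw h2
    have hcyc : (Walk.cons huv.symm q').IsCycle :=
      (Walk.cons_isCycle_iff q' huv.symm).mpr ⟨hq'path, hnotin⟩
    -- pick the color b = !c ; exactly one of the two endpoint edges has it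
    apply hδ.2.2 _ hcyc (!c)
    rw [Walk.edges_cons, hq'edges, List.countP_cons, List.countP_append, hedges]
    have hpc : p.edges.countP (fun e => δ e == !c) = 0 := by
      rw [List.countP_eq_zero]
      intro e he
      simp only [beq_iff_eq]
      rw [(hcol e he).2]
      simp
    rw [hpc]
    have huv' : δ s(v, u) = δ s(u, v) := by rw [Sym2.eq_swap]
    have hwv' : δ s(w, v) = δ s(v, w) := by rw [Sym2.eq_swap]
    rcases Bool.eq_or_eq_not (δ s(u, v)) c with h1 | h1
    · have h2 : δ s(v, w) = !c := by
        rcases Bool.eq_or_eq_not (δ s(v, w)) c with h | h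
        · exact absurd (h1.trans h.symm) hne
        · exact h
      simp [huv', hwv', h1, h2]
    · have h2 : δ s(v, w) = c := by
        rcases Bool.eq_or_eq_not (δ s(v, w)) c with h | h
        · exact h
        · exact absurd (h1.trans h.symm) hne
      simp [huv', hwv', h1, h2]
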